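/- Let n ≥ 2 and m ≥ 1 and let μ_{n,m} be the two-stage pair-sampling law associated with a probability measure ν on pairs of probability measures on 𝒴. Then the distributional covariance estimator is unbiased: ∫ Ĉov_k^{(n,m)}(X, Y) dμ_{n,m}(X, Y) = Cov_k(ν) = ∫ ⟨P|k|Q⟩ dν(P, Q) − ⟨join(ν₁)|k|join(ν₂)⟩, where ν₁, ν₂ are the two marginals of ν. -/

import Mathlib

open MeasureTheory ProbabilityTheory

noncomputable section

/-- The σ-algebra on the space of probability measures induced from the σ-algebra on
`Measure Y` generated by the evaluation maps. -/
instance {Y : Type*} [MeasurableSpace Y] : MeasurableSpace (ProbabilityMeasure Y) :=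
  MeasurableSpace.comap (fun P => (P : Measure Y)) inferInstance

/-- The kernel bilinear form `⟨P|k|Q⟩ = ∫∫ k(x,y) dP(x) dQ(y)`. -/
def kerInner {Y : Type*} [MeasurableSpace Y] (k : Y → Y → ℝ) (P Q : Measure Y) : ℝ :=
  ∫ x, ∫ y, k x y ∂Q ∂P

/-- `join(ν)`: the probability measure `A ↦ ∫ P(A) dν(P)`. -/
def pmJoin {Y : Type*} [MeasurableSpace Y] (ν : Measure (ProbabilityMeasure Y)) : Measure Y :=
  ν.bind (fun P => (P : Measure Y))

/-- The two-stage pair-sampling law `μ_{n,m}` on `Fin n → (Fin m → Y) × (Fin m → Y)`: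
sample pairs `(P₁, Q₁), …, (Pₙ, Qₙ)` i.i.d. from `ν`, then conditionally on `(Pᵢ, Qᵢ)`
sample `X_{i1}, …, X_{im}` i.i.d. from `Pᵢ` and `Y_{i1}, …, Y_{im}` i.i.d. from `Qᵢ`,
conditionally independently, and independently across `i`. -/
def pairTwoStage {Y : Type*} [MeasurableSpace Y]
    (ν : Measure (ProbabilityMeasure Y × ProbabilityMeasure Y)) (n m : ℕ) :
    Measure (Fin n → (Fin m → Y) × (Fin m → Y)) :=
  (Measure.pi fun _ : Fin n => ν).bind
    (fun PQ => Measure.pi fun i : Fin n =>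
      (Measure.pi fun _ : Fin m => ((PQ i).1 : Measure Y)).prod
        (Measure.pi fun _ : Fin m => ((PQ i).2 : Measure Y)))

/-- The distributional covariance estimator
`Ĉov_k^{(n,m)}(X, Y) = (1/(n m²)) Σᵢ Σ_{j,t} k(X_{ij}, Y_{it})
  − (1/(n (n−1) m²)) Σ_{i≠s} Σ_{j,t} k(X_{ij}, Y_{st})`. -/
def covEst {Y : Type*} (k : Y → Y → ℝ) (n m : ℕ) (X Y' : Fin n → Fin m → Y) : ℝ :=
  (1 / ((n : ℝ) * (m : ℝ) ^ 2)) * ∑ i, ∑ j, ∑ t, k (X i j) (Y' i t)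
  - (1 / ((n : ℝ) * ((n : ℝ) - 1) * (m : ℝ) ^ 2)) *
      ∑ i, ∑ s ∈ Finset.univ.erase i, ∑ j, ∑ t, k (X i j) (Y' s t)

namespace CovAux

variable {α β γ : Type*} [MeasurableSpace α] [MeasurableSpace β] [MeasurableSpace γ]

lemma integrable_of_bound (μ : Measure α) [IsFiniteMeasure μ] {f : α → ℝ}
    (hf : AEStronglyMeasurable f μ) (C : ℝ) (hC : ∀ a, |f a| ≤ C) : Integrable f μ :=
  (integrable_const C).mono' hf (Filter.Eventually.of_forall fun a => by
    simpa [Real.norm_eq_abs] using hC a)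

lemma abs_integral_le (μ : Measure α) [IsProbabilityMeasure μ] {f : α → ℝ} {C : ℝ}
    (hC : ∀ a, |f a| ≤ C) : |∫ a, f a ∂μ| ≤ C := by
  have := norm_integral_le_of_norm_le_const (μ := μ) (f := f) (C := C)
    (Filter.Eventually.of_forall fun a => by simpa [Real.norm_eq_abs] using hC a)
  simpa [Real.norm_eq_abs, measure_univ] using this

lemma sm_integral_kernel (κ : α → Measure β) (hκ : Measurable κ)
    (hp : ∀ a, IsProbabilityMeasure (κ a)) {f : α × β → ℝ} (hf : StronglyMeasurable f) :
    StronglyMeasurable fun a => ∫ b, f (a, b) ∂κ a := by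
  letI K : Kernel α β := ⟨κ, hκ⟩
  haveI : IsMarkovKernel K := ⟨fun a => hp a⟩
  exact hf.integral_kernel_prod_right' (κ := K)

lemma isProbabilityMeasure_bind (m : Measure α) [IsProbabilityMeasure m] (κ : α → Measure β)
    (hκ : Measurable κ) (hp : ∀ a, IsProbabilityMeasure (κ a)) :
    IsProbabilityMeasure (m.bind κ) := by
  constructor
  rw [Measure.bind_apply MeasurableSet.univ hκ.aemeasurable]
  simp [fun a => (hp a).measure_univ]

lemma integral_bind_nonneg (m : Measure α) [IsProbabilityMeasure m] (κ : α → Measure β)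
    (hκ : Measurable κ) (hp : ∀ a, IsProbabilityMeasure (κ a)) {f : β → ℝ}
    (hf : Measurable f) (h0 : ∀ b, 0 ≤ f b) (C : ℝ) (hCb : ∀ b, f b ≤ C) :
    ∫ b, f b ∂(m.bind κ) = ∫ a, ∫ b, f b ∂(κ a) ∂m := by
  have hof : Measurable fun b => ENNReal.ofReal (f b) := hf.ennreal_ofReal
  have e1 : ∫ b, f b ∂(m.bind κ)
      = (∫⁻ b, ENNReal.ofReal (f b) ∂(m.bind κ)).toReal :=
    integral_eq_lintegral_of_nonneg_ae (Filter.Eventually.of_forall h0)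
      hf.aestronglyMeasurable
  rw [e1, Measure.lintegral_bind hκ.aemeasurable hof.aemeasurable]
  set L := fun a => ∫⁻ b, ENNReal.ofReal (f b) ∂κ a with hL
  have hLmeas : Measurable L := (Measure.measurable_lintegral hof).comp hκ
  have hLle : ∀ a, L a ≤ ENNReal.ofReal C := by
    intro a
    haveI := hp a
    calc L a ≤ ∫⁻ b, ENNReal.ofReal C ∂κ a :=
          lintegral_mono fun b => ENNReal.ofReal_le_ofReal (hCb b)
      _ = ENNReal.ofReal C := by simp [measure_univ]
  have e2 : (∫⁻ a, L a ∂m).toReal = ∫ a, (L a).toReal ∂m :=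
    (integral_toReal hLmeas.aemeasurable (Filter.Eventually.of_forall fun a =>
      lt_of_le_of_lt (hLle a) ENNReal.ofReal_lt_top)).symm
  rw [e2]
  refine integral_congr_ae (Filter.Eventually.of_forall fun a => ?_)
  exact (integral_eq_lintegral_of_nonneg_ae (Filter.Eventually.of_forall h0)
    hf.aestronglyMeasurable).symm

lemma integral_bind (m : Measure α) [IsProbabilityMeasure m] (κ : α → Measure β)
    (hκ : Measurable κ) (hp : ∀ a, IsProbabilityMeasure (κ a)) {f : β → ℝ}
    (hf : Measurable f) (C : ℝ) (hC : ∀ b, |f b| ≤ C) :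
    ∫ b, f b ∂(m.bind κ) = ∫ a, ∫ b, f b ∂(κ a) ∂m := by
  haveI := isProbabilityMeasure_bind m κ hκ hp
  have hg : Measurable fun b => f b + C := hf.add_const C
  have h0 : ∀ b, 0 ≤ f b + C := fun b => by
    have := (abs_le.1 (hC b)).1; linarith
  have hCb : ∀ b, f b + C ≤ C + C := fun b => by
    have := (abs_le.1 (hC b)).2; linarith
  have key := integral_bind_nonneg m κ hκ hp hg h0 (C + C) hCb
  have hfi : Integrable f (m.bind κ) :=
    integrable_of_bound _ hf.aestronglyMeasurable C hC
  have hfa : ∀ a, Integrable f (κ a) := fun a => by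
    haveI := hp a
    exact integrable_of_bound _ hf.aestronglyMeasurable C hC
  rw [integral_add hfi (integrable_const C), integral_const] at key
  have hinner : ∀ a, ∫ b, f b + C ∂κ a = (∫ b, f b ∂κ a) + C := fun a => by
    haveI := hp a
    rw [integral_add (hfa a) (integrable_const C), integral_const]
    simp [measure_univ]
  rw [integral_congr_ae (Filter.Eventually.of_forall hinner)] at key
  have hintmeas : StronglyMeasurable fun a => ∫ b, f b ∂κ a := by
    have := sm_integral_kernel κ hκ hp (f := fun p : α × β => f p.2)
      (hf.comp measurable_snd).stronglyMeasurable
    exact this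
  have hinti : Integrable (fun a => ∫ b, f b ∂κ a) m := by
    refine integrable_of_bound _ hintmeas.aestronglyMeasurable C fun a => ?_
    haveI := hp a
    exact abs_integral_le (κ a) hC
  rw [integral_add hinti (integrable_const C), integral_const] at key
  simp only [measure_univ, probReal_univ, ENNReal.toReal_one, smul_eq_mul, one_mul] at key
  linarith


section PiMeas

variable {ι : Type*} [Fintype ι] {δ : ι → Type*} [∀ i, MeasurableSpace (δ i)]

lemma measurable_measurePi {g : ∀ i, α → Measure (δ i)} (hg : ∀ i, Measurable (g i))
    (hp : ∀ i a, IsProbabilityMeasure (g i a)) :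
    Measurable fun a => Measure.pi fun i => g i a := by
  haveI inst : ∀ a i, IsProbabilityMeasure (g i a) := fun a i => hp i a
  refine Measure.measurable_of_measurable_coe _ fun s hs => ?_
  refine MeasurableSpace.induction_on_inter
    (C := fun s _ => Measurable fun a => (Measure.pi fun i => g i a) s)
    generateFrom_pi.symm isPiSystem_pi (by simp) ?_ ?_ ?_ _ hs
  · rintro t ⟨F, hF, rfl⟩
    have : ∀ a, (Measure.pi fun i => g i a) (Set.pi Set.univ F) = ∏ i, g i a (F i) :=
      fun a => Measure.pi_pi _ _
    simp_rw [this]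
    exact Finset.measurable_prod _ fun i _ =>
      (Measure.measurable_coe (hF i (Set.mem_univ i))).comp (hg i)
  · intro t ht h
    have : ∀ a, (Measure.pi fun i => g i a) tᶜ = 1 - (Measure.pi fun i => g i a) t := by
      intro a
      haveI : IsProbabilityMeasure (Measure.pi fun i => g i a) := inferInstance
      rw [measure_compl ht (measure_ne_top _ _), measure_univ]
    simp_rw [this]
    exact measurable_const.sub h
  · intro f hd hm h
    have : ∀ a, (Measure.pi fun i => g i a) (⋃ i, f i) = ∑' i, (Measure.pi fun i => g i a) (f i) :=
      fun a => measure_iUnion hd hm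
    simp_rw [this]
    exact Measurable.ennreal_tsum h

lemma measurable_measureProd {g₁ : α → Measure β} {g₂ : α → Measure γ}
    (h₁ : Measurable g₁) (h₂ : Measurable g₂)
    (hp₁ : ∀ a, IsProbabilityMeasure (g₁ a)) (hp₂ : ∀ a, IsProbabilityMeasure (g₂ a)) :
    Measurable fun a => (g₁ a).prod (g₂ a) := by
  letI K₁ : Kernel α β := ⟨g₁, h₁⟩
  letI K₂ : Kernel α γ := ⟨g₂, h₂⟩
  haveI : IsMarkovKernel K₁ := ⟨fun a => hp₁ a⟩
  haveI : IsMarkovKernel K₂ := ⟨fun a => hp₂ a⟩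
  have : (fun a => (g₁ a).prod (g₂ a)) = fun a => (K₁ ×ₖ K₂) a :=
    funext fun a => (Kernel.prod_apply K₁ K₂ a).symm
  rw [this]
  exact (K₁ ×ₖ K₂).measurable

end PiMeas

section PiMap

variable {n : ℕ} (μ : Fin n → Measure β) [∀ i, IsProbabilityMeasure (μ i)]

lemma pi_map_eval (i : Fin n) : (Measure.pi μ).map (fun Z => Z i) = μ i := by
  ext s hs
  rw [Measure.map_apply (measurable_pi_apply i) hs]
  have hpre : (fun Z : Fin n → β => Z i) ⁻¹' s
      = Set.pi Set.univ (fun r => if r = i then s else Set.univ) := by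
    ext Z
    simp only [Set.mem_preimage, Set.mem_pi, Set.mem_univ, forall_true_left]
    constructor
    · intro h r
      split_ifs with hr
      · subst hr; exact h
      · exact Set.mem_univ _
    · intro h
      have := h i
      simpa using this
  rw [hpre, Measure.pi_pi]
  rw [Finset.prod_eq_single i (fun r _ hr => by simp [hr, measure_univ])
    (fun h => absurd (Finset.mem_univ i) h)]
  simp

lemma pi_map_eval_pair {i s : Fin n} (his : i ≠ s) :
    (Measure.pi μ).map (fun Z => (Z i, Z s)) = (μ i).prod (μ s) := by
  refine (Measure.prod_eq (μ := μ i) (ν := μ s) (μν := (Measure.pi μ).map (fun Z => (Z i, Z s))) fun u v hu hv => ?_).symm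
  rw [Measure.map_apply ((measurable_pi_apply i).prodMk (measurable_pi_apply s)) (hu.prod hv)]
  have hpre : (fun Z : Fin n → β => (Z i, Z s)) ⁻¹' (u ×ˢ v)
      = Set.pi Set.univ (fun r => if r = i then u else if r = s then v else Set.univ) := by
    ext Z
    simp only [Set.mem_preimage, Set.mem_prod, Set.mem_pi, Set.mem_univ, forall_true_left]
    constructor
    · rintro ⟨h1, h2⟩ r
      split_ifs with hr hr'
      · subst hr; exact h1
      · subst hr'; exact h2
      · exact Set.mem_univ _
    · intro h
      constructor
      · have := h i; simpa using this
      · have := h s; simpa [if_neg (Ne.symm his)] using this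
  rw [hpre, Measure.pi_pi]
  classical
  rw [← Finset.mul_prod_erase Finset.univ _ (Finset.mem_univ i)]
  rw [← Finset.mul_prod_erase (Finset.univ.erase i) _
    (Finset.mem_erase.2 ⟨Ne.symm his, Finset.mem_univ s⟩)]
  have h3 : ∏ r ∈ (Finset.univ.erase i).erase s,
      μ r (if r = i then u else if r = s then v else Set.univ) = 1 := by
    refine Finset.prod_eq_one fun r hr => ?_
    have hrs : r ≠ s := (Finset.mem_erase.1 hr).1
    have hri : r ≠ i := (Finset.mem_erase.1 (Finset.mem_erase.1 hr).2).1
    rw [if_neg hri, if_neg hrs, measure_univ]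
  rw [h3, if_pos rfl, if_neg (Ne.symm his), if_pos rfl, mul_one]

end PiMap



section YSpecific

variable {Y : Type*} [MeasurableSpace Y]

lemma measurable_pmCoe : Measurable fun P : ProbabilityMeasure Y => (P : Measure Y) :=
  Measurable.of_comap_le le_rfl

variable {k : Y → Y → ℝ}

lemma sm_kInt (hk : Measurable fun p : Y × Y => k p.1 p.2) :
    StronglyMeasurable fun xQ : Y × ProbabilityMeasure Y =>
      ∫ y, k xQ.1 y ∂(xQ.2 : Measure Y) := by
  have := sm_integral_kernel (κ := fun xQ : Y × ProbabilityMeasure Y => (xQ.2 : Measure Y))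
    (measurable_pmCoe.comp measurable_snd) (fun a => inferInstance)
    (f := fun p : (Y × ProbabilityMeasure Y) × Y => k p.1.1 p.2)
    (hk.comp (measurable_fst.fst.prodMk measurable_snd)).stronglyMeasurable
  exact this

lemma sm_kerInner (hk : Measurable fun p : Y × Y => k p.1 p.2) :
    StronglyMeasurable fun pq : ProbabilityMeasure Y × ProbabilityMeasure Y =>
      kerInner k (pq.1 : Measure Y) (pq.2 : Measure Y) := by
  have := sm_integral_kernel
    (κ := fun pq : ProbabilityMeasure Y × ProbabilityMeasure Y => (pq.1 : Measure Y))
    (measurable_pmCoe.comp measurable_fst) (fun a => inferInstance)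
    (f := fun p : (ProbabilityMeasure Y × ProbabilityMeasure Y) × Y =>
      ∫ y, k p.2 y ∂((p.1.2 : ProbabilityMeasure Y) : Measure Y))
    ((sm_kInt hk).comp_measurable (measurable_snd.prodMk measurable_fst.snd))
  exact this

lemma kerInner_bound {C : ℝ} (hC : ∀ x y, |k x y| ≤ C) (P Q : ProbabilityMeasure Y) :
    |kerInner k (P : Measure Y) (Q : Measure Y)| ≤ C := by
  refine abs_integral_le _ fun x => abs_integral_le _ fun y => hC x y

lemma inner_eq_ne (hk : Measurable fun p : Y × Y => k p.1 p.2) {C : ℝ}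
    (hC : ∀ x y, |k x y| ≤ C) {n m : ℕ}
    (PQ : Fin n → ProbabilityMeasure Y × ProbabilityMeasure Y)
    {i s : Fin n} (his : i ≠ s) (j t : Fin m) :
    ∫ Z : Fin n → (Fin m → Y) × (Fin m → Y), k ((Z i).1 j) ((Z s).2 t)
        ∂(Measure.pi fun r : Fin n =>
          (Measure.pi fun _ : Fin m => ((PQ r).1 : Measure Y)).prod
            (Measure.pi fun _ : Fin m => ((PQ r).2 : Measure Y)))
      = kerInner k ((PQ i).1 : Measure Y) ((PQ s).2 : Measure Y) := by
  set ρ : Fin n → Measure ((Fin m → Y) × (Fin m → Y)) := fun r =>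
    (Measure.pi fun _ : Fin m => ((PQ r).1 : Measure Y)).prod
      (Measure.pi fun _ : Fin m => ((PQ r).2 : Measure Y)) with hρ
  haveI : ∀ r, IsProbabilityMeasure (ρ r) := fun r => by rw [hρ]; infer_instance
  have hpair : Measurable
      fun w : ((Fin m → Y) × (Fin m → Y)) × ((Fin m → Y) × (Fin m → Y)) =>
        ((w.1.1 j), (w.2.2 t)) :=
    ((measurable_pi_apply j).comp measurable_fst.fst).prodMk
      ((measurable_pi_apply t).comp measurable_snd.snd)
  have hgm : StronglyMeasurable
      fun w : ((Fin m → Y) × (Fin m → Y)) × ((Fin m → Y) × (Fin m → Y)) =>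
        k (w.1.1 j) (w.2.2 t) := (hk.comp hpair).stronglyMeasurable
  have e1 : ∫ Z, k ((Z i).1 j) ((Z s).2 t) ∂(Measure.pi ρ)
      = ∫ w, k (w.1.1 j) (w.2.2 t) ∂((ρ i).prod (ρ s)) := by
    rw [← pi_map_eval_pair ρ his,
      integral_map ((measurable_pi_apply i).prodMk (measurable_pi_apply s)).aemeasurable
        hgm.aestronglyMeasurable]
  rw [e1, integral_prod _ (integrable_of_bound _ hgm.aestronglyMeasurable C
    (fun w => hC _ _))]
  have e3 : ∀ w₁ : (Fin m → Y) × (Fin m → Y),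
      ∫ w₂, k (w₁.1 j) (w₂.2 t) ∂(ρ s) = ∫ y, k (w₁.1 j) y ∂((PQ s).2 : Measure Y) := by
    intro w₁
    have hm1 : StronglyMeasurable fun y2 : Fin m → Y => k (w₁.1 j) (y2 t) := by
      have hp2 : Measurable fun y2 : Fin m → Y => ((w₁.1 j), (y2 t)) :=
        measurable_const.prodMk (measurable_pi_apply t)
      exact (hk.comp hp2).stronglyMeasurable
    have hm2 : StronglyMeasurable fun y : Y => k (w₁.1 j) y := by
      have hp2 : Measurable fun y : Y => ((w₁.1 j), y) :=
        measurable_const.prodMk measurable_id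
      exact (hk.comp hp2).stronglyMeasurable
    have hsnd : (ρ s).map Prod.snd = Measure.pi fun _ : Fin m => ((PQ s).2 : Measure Y) := by
      simp only [hρ]
      rw [Measure.map_snd_prod, measure_univ, one_smul]
    calc ∫ w₂, k (w₁.1 j) (w₂.2 t) ∂(ρ s)
        = ∫ y2, k (w₁.1 j) (y2 t) ∂((ρ s).map Prod.snd) := by
          rw [integral_map measurable_snd.aemeasurable hm1.aestronglyMeasurable]
      _ = ∫ y2, k (w₁.1 j) (y2 t) ∂(Measure.pi fun _ : Fin m => ((PQ s).2 : Measure Y)) := by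
          rw [hsnd]
      _ = ∫ y, k (w₁.1 j) y
            ∂((Measure.pi fun _ : Fin m => ((PQ s).2 : Measure Y)).map fun y2 => y2 t) := by
          rw [integral_map (measurable_pi_apply t).aemeasurable hm2.aestronglyMeasurable]
      _ = ∫ y, k (w₁.1 j) y ∂((PQ s).2 : Measure Y) := by
          rw [pi_map_eval (fun _ : Fin m => ((PQ s).2 : Measure Y)) t]
  rw [integral_congr_ae (Filter.Eventually.of_forall e3)]
  have hgsm : StronglyMeasurable fun u : Y => ∫ y, k u y ∂((PQ s).2 : Measure Y) :=
    (sm_kInt hk).comp_measurable (measurable_id.prodMk measurable_const)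
  have hmm : StronglyMeasurable
      fun x : Fin m → Y => ∫ y, k (x j) y ∂((PQ s).2 : Measure Y) :=
    hgsm.comp_measurable (measurable_pi_apply j)
  have hfst : (ρ i).map Prod.fst = Measure.pi fun _ : Fin m => ((PQ i).1 : Measure Y) := by
    simp only [hρ]
    rw [Measure.map_fst_prod, measure_univ, one_smul]
  calc ∫ w₁, (∫ y, k (w₁.1 j) y ∂((PQ s).2 : Measure Y)) ∂(ρ i)
      = ∫ x, (∫ y, k (x j) y ∂((PQ s).2 : Measure Y)) ∂((ρ i).map Prod.fst) := by
        rw [integral_map measurable_fst.aemeasurable hmm.aestronglyMeasurable]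
    _ = ∫ x, (∫ y, k (x j) y ∂((PQ s).2 : Measure Y))
          ∂(Measure.pi fun _ : Fin m => ((PQ i).1 : Measure Y)) := by rw [hfst]
    _ = ∫ u, (∫ y, k u y ∂((PQ s).2 : Measure Y))
          ∂((Measure.pi fun _ : Fin m => ((PQ i).1 : Measure Y)).map fun x => x j) := by
        rw [integral_map (measurable_pi_apply j).aemeasurable hgsm.aestronglyMeasurable]
    _ = kerInner k ((PQ i).1 : Measure Y) ((PQ s).2 : Measure Y) := by
        rw [pi_map_eval (fun _ : Fin m => ((PQ i).1 : Measure Y)) j]; rfl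

lemma inner_eq_eq (hk : Measurable fun p : Y × Y => k p.1 p.2) {C : ℝ}
    (hC : ∀ x y, |k x y| ≤ C) {n m : ℕ}
    (PQ : Fin n → ProbabilityMeasure Y × ProbabilityMeasure Y)
    (i : Fin n) (j t : Fin m) :
    ∫ Z : Fin n → (Fin m → Y) × (Fin m → Y), k ((Z i).1 j) ((Z i).2 t)
        ∂(Measure.pi fun r : Fin n =>
          (Measure.pi fun _ : Fin m => ((PQ r).1 : Measure Y)).prod
            (Measure.pi fun _ : Fin m => ((PQ r).2 : Measure Y)))
      = kerInner k ((PQ i).1 : Measure Y) ((PQ i).2 : Measure Y) := by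
  set ρ : Fin n → Measure ((Fin m → Y) × (Fin m → Y)) := fun r =>
    (Measure.pi fun _ : Fin m => ((PQ r).1 : Measure Y)).prod
      (Measure.pi fun _ : Fin m => ((PQ r).2 : Measure Y)) with hρ
  haveI : ∀ r, IsProbabilityMeasure (ρ r) := fun r => by rw [hρ]; infer_instance
  have hpair : Measurable fun w : (Fin m → Y) × (Fin m → Y) => ((w.1 j), (w.2 t)) :=
    ((measurable_pi_apply j).comp measurable_fst).prodMk
      ((measurable_pi_apply t).comp measurable_snd)
  have hgm : StronglyMeasurable fun w : (Fin m → Y) × (Fin m → Y) => k (w.1 j) (w.2 t) :=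
    (hk.comp hpair).stronglyMeasurable
  have e1 : ∫ Z, k ((Z i).1 j) ((Z i).2 t) ∂(Measure.pi ρ)
      = ∫ w, k (w.1 j) (w.2 t) ∂(ρ i) := by
    calc ∫ Z, k ((Z i).1 j) ((Z i).2 t) ∂(Measure.pi ρ)
        = ∫ w, k (w.1 j) (w.2 t) ∂((Measure.pi ρ).map fun Z => Z i) := by
          rw [integral_map (measurable_pi_apply i).aemeasurable hgm.aestronglyMeasurable]
      _ = ∫ w, k (w.1 j) (w.2 t) ∂(ρ i) := by rw [pi_map_eval ρ i]
  rw [e1]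
  simp only [hρ]
  rw [integral_prod _ (integrable_of_bound _ hgm.aestronglyMeasurable C (fun w => hC _ _))]
  have e3 : ∀ x : Fin m → Y,
      ∫ y2 : Fin m → Y, k (x j) (y2 t) ∂(Measure.pi fun _ : Fin m => ((PQ i).2 : Measure Y))
        = ∫ y, k (x j) y ∂((PQ i).2 : Measure Y) := by
    intro x
    have hm2 : StronglyMeasurable fun y : Y => k (x j) y := by
      have hp2 : Measurable fun y : Y => ((x j), y) :=
        measurable_const.prodMk measurable_id
      exact (hk.comp hp2).stronglyMeasurable
    calc ∫ y2 : Fin m → Y, k (x j) (y2 t) ∂(Measure.pi fun _ : Fin m => ((PQ i).2 : Measure Y))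
        = ∫ y, k (x j) y
            ∂((Measure.pi fun _ : Fin m => ((PQ i).2 : Measure Y)).map fun y2 => y2 t) := by
          rw [integral_map (measurable_pi_apply t).aemeasurable hm2.aestronglyMeasurable]
      _ = ∫ y, k (x j) y ∂((PQ i).2 : Measure Y) := by
          rw [pi_map_eval (fun _ : Fin m => ((PQ i).2 : Measure Y)) t]
  rw [integral_congr_ae (Filter.Eventually.of_forall e3)]
  have hgsm : StronglyMeasurable fun u : Y => ∫ y, k u y ∂((PQ i).2 : Measure Y) :=
    (sm_kInt hk).comp_measurable (measurable_id.prodMk measurable_const)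
  calc ∫ x, (∫ y, k (x j) y ∂((PQ i).2 : Measure Y))
        ∂(Measure.pi fun _ : Fin m => ((PQ i).1 : Measure Y))
      = ∫ u, (∫ y, k u y ∂((PQ i).2 : Measure Y))
          ∂((Measure.pi fun _ : Fin m => ((PQ i).1 : Measure Y)).map fun x => x j) := by
        rw [integral_map (measurable_pi_apply j).aemeasurable hgsm.aestronglyMeasurable]
    _ = kerInner k ((PQ i).1 : Measure Y) ((PQ i).2 : Measure Y) := by
        rw [pi_map_eval (fun _ : Fin m => ((PQ i).1 : Measure Y)) j]; rfl

lemma M_eval_pair (hk : Measurable fun p : Y × Y => k p.1 p.2) {C : ℝ}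
    (hC : ∀ x y, |k x y| ≤ C)
    (ν : Measure (ProbabilityMeasure Y × ProbabilityMeasure Y)) [IsProbabilityMeasure ν]
    {n : ℕ} {i s : Fin n} (his : i ≠ s) :
    ∫ PQ : Fin n → ProbabilityMeasure Y × ProbabilityMeasure Y,
        kerInner k ((PQ i).1 : Measure Y) ((PQ s).2 : Measure Y)
        ∂(Measure.pi fun _ : Fin n => ν)
      = ∫ p, ∫ q, kerInner k (p.1 : Measure Y) (q.2 : Measure Y) ∂ν ∂ν := by
  have hsm : StronglyMeasurable
      fun w : (ProbabilityMeasure Y × ProbabilityMeasure Y) ×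
          (ProbabilityMeasure Y × ProbabilityMeasure Y) =>
        kerInner k (w.1.1 : Measure Y) (w.2.2 : Measure Y) :=
    (sm_kerInner hk).comp_measurable (measurable_fst.fst.prodMk measurable_snd.snd)
  calc ∫ PQ : Fin n → ProbabilityMeasure Y × ProbabilityMeasure Y,
        kerInner k ((PQ i).1 : Measure Y) ((PQ s).2 : Measure Y)
        ∂(Measure.pi fun _ : Fin n => ν)
      = ∫ w, kerInner k (w.1.1 : Measure Y) (w.2.2 : Measure Y)
          ∂((Measure.pi fun _ : Fin n => ν).map fun PQ => (PQ i, PQ s)) := by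
        rw [integral_map ((measurable_pi_apply i).prodMk (measurable_pi_apply s)).aemeasurable hsm.aestronglyMeasurable]
    _ = ∫ w, kerInner k (w.1.1 : Measure Y) (w.2.2 : Measure Y) ∂(ν.prod ν) := by
        rw [pi_map_eval_pair (fun _ : Fin n => ν) his]
    _ = ∫ p, ∫ q, kerInner k (p.1 : Measure Y) (q.2 : Measure Y) ∂ν ∂ν :=
        integral_prod _ (integrable_of_bound _ hsm.aestronglyMeasurable C
          (fun w => kerInner_bound hC _ _))

lemma M_eval_single (hk : Measurable fun p : Y × Y => k p.1 p.2)
    (ν : Measure (ProbabilityMeasure Y × ProbabilityMeasure Y)) [IsProbabilityMeasure ν]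
    {n : ℕ} (i : Fin n) :
    ∫ PQ : Fin n → ProbabilityMeasure Y × ProbabilityMeasure Y,
        kerInner k ((PQ i).1 : Measure Y) ((PQ i).2 : Measure Y)
        ∂(Measure.pi fun _ : Fin n => ν)
      = ∫ p, kerInner k (p.1 : Measure Y) (p.2 : Measure Y) ∂ν := by
  calc ∫ PQ : Fin n → ProbabilityMeasure Y × ProbabilityMeasure Y,
        kerInner k ((PQ i).1 : Measure Y) ((PQ i).2 : Measure Y)
        ∂(Measure.pi fun _ : Fin n => ν)
      = ∫ p, kerInner k (p.1 : Measure Y) (p.2 : Measure Y)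
          ∂((Measure.pi fun _ : Fin n => ν).map fun PQ => PQ i) :=
        by rw [integral_map (measurable_pi_apply i).aemeasurable
            (sm_kerInner hk).aestronglyMeasurable]
    _ = ∫ p, kerInner k (p.1 : Measure Y) (p.2 : Measure Y) ∂ν := by
        rw [pi_map_eval (fun _ : Fin n => ν) i]

lemma join_eq (hk : Measurable fun p : Y × Y => k p.1 p.2) {C : ℝ}
    (hC : ∀ x y, |k x y| ≤ C)
    (ν : Measure (ProbabilityMeasure Y × ProbabilityMeasure Y)) [IsProbabilityMeasure ν] :
    ∫ p, ∫ q, kerInner k (p.1 : Measure Y) (q.2 : Measure Y) ∂ν ∂ν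
      = kerInner k (pmJoin (ν.map Prod.fst)) (pmJoin (ν.map Prod.snd)) := by
  haveI h1 : IsProbabilityMeasure (ν.map Prod.fst) :=
    Measure.isProbabilityMeasure_map measurable_fst.aemeasurable
  haveI h2 : IsProbabilityMeasure (ν.map Prod.snd) :=
    Measure.isProbabilityMeasure_map measurable_snd.aemeasurable
  haveI hj1 : IsProbabilityMeasure (pmJoin (ν.map Prod.fst)) :=
    isProbabilityMeasure_bind _ _ measurable_pmCoe (fun P => inferInstance)
  haveI hj2 : IsProbabilityMeasure (pmJoin (ν.map Prod.snd)) :=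
    isProbabilityMeasure_bind _ _ measurable_pmCoe (fun P => inferInstance)
  -- the common value : ∫ P, ∫ Q, kerInner k P Q ∂ν₂ ∂ν₁
  have hGsm : StronglyMeasurable fun P : ProbabilityMeasure Y =>
      ∫ Q, kerInner k (P : Measure Y) (Q.2 : Measure Y) ∂ν := by
    have := sm_integral_kernel
      (κ := fun _ : ProbabilityMeasure Y => ν) measurable_const (fun _ => inferInstance)
      (f := fun pq : ProbabilityMeasure Y × (ProbabilityMeasure Y × ProbabilityMeasure Y) =>
        kerInner k (pq.1 : Measure Y) (pq.2.2 : Measure Y))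
      ((sm_kerInner hk).comp_measurable (measurable_fst.prodMk measurable_snd.snd))
    exact this
  -- LHS = ∫ P, ∫ q, kerInner ↑P ↑q.2 ∂ν ∂ν₁
  have hL : ∫ p, ∫ q, kerInner k (p.1 : Measure Y) (q.2 : Measure Y) ∂ν ∂ν
      = ∫ P, ∫ q, kerInner k (P : Measure Y) (q.2 : Measure Y) ∂ν ∂(ν.map Prod.fst) := by
    rw [integral_map measurable_fst.aemeasurable hGsm.aestronglyMeasurable]
  rw [hL]
  -- RHS: unfold joins
  have hRinner : ∀ x : Y, ∫ y, k x y ∂(pmJoin (ν.map Prod.snd))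
      = ∫ q, ∫ y, k x y ∂(q.2 : Measure Y) ∂ν := by
    intro x
    have hb := integral_bind (ν.map Prod.snd) (fun P : ProbabilityMeasure Y => (P : Measure Y))
      measurable_pmCoe (fun P => inferInstance)
      (f := fun y => k x y) (hk.comp (measurable_const.prodMk measurable_id)) C (fun y => hC x y)
    rw [show pmJoin (ν.map Prod.snd)
        = (ν.map Prod.snd).bind (fun P : ProbabilityMeasure Y => (P : Measure Y)) from rfl, hb]
    have hp : Measurable fun Q : ProbabilityMeasure Y => (x, Q) :=
      measurable_const.prodMk measurable_id
    have hsm1 : StronglyMeasurable fun Q : ProbabilityMeasure Y =>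
        ∫ y, k x y ∂(Q : Measure Y) := by exact (sm_kInt hk).comp_measurable hp
    rw [integral_map (f := fun Q : ProbabilityMeasure Y => ∫ y, k x y ∂(Q : Measure Y))
      measurable_snd.aemeasurable hsm1.aestronglyMeasurable]
  have hfsm : StronglyMeasurable fun x : Y => ∫ q, ∫ y, k x y ∂(q.2 : Measure Y) ∂ν := by
    have := sm_integral_kernel
      (κ := fun _ : Y => ν) measurable_const (fun _ => inferInstance)
      (f := fun p : Y × (ProbabilityMeasure Y × ProbabilityMeasure Y) =>
        ∫ y, k p.1 y ∂(p.2.2 : Measure Y))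
      ((sm_kInt hk).comp_measurable (measurable_fst.prodMk measurable_snd.snd))
    exact this
  have hfbound : ∀ x : Y, |∫ q, ∫ y, k x y ∂(q.2 : Measure Y) ∂ν| ≤ C := fun x =>
    abs_integral_le _ fun q => abs_integral_le _ fun y => hC x y
  have hR : kerInner k (pmJoin (ν.map Prod.fst)) (pmJoin (ν.map Prod.snd))
      = ∫ P, ∫ x, (∫ q, ∫ y, k x y ∂(q.2 : Measure Y) ∂ν) ∂(P : Measure Y)
          ∂(ν.map Prod.fst) := by
    have : kerInner k (pmJoin (ν.map Prod.fst)) (pmJoin (ν.map Prod.snd))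
        = ∫ x, (∫ q, ∫ y, k x y ∂(q.2 : Measure Y) ∂ν) ∂(pmJoin (ν.map Prod.fst)) :=
      integral_congr_ae (Filter.Eventually.of_forall hRinner)
    rw [this]
    have hb := integral_bind (ν.map Prod.fst) (fun P : ProbabilityMeasure Y => (P : Measure Y))
      measurable_pmCoe (fun P => inferInstance)
      (f := fun x => ∫ q, ∫ y, k x y ∂(q.2 : Measure Y) ∂ν) hfsm.measurable C hfbound
    rw [show pmJoin (ν.map Prod.fst)
        = (ν.map Prod.fst).bind (fun P : ProbabilityMeasure Y => (P : Measure Y)) from rfl, hb]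
  rw [hR]
  refine integral_congr_ae (Filter.Eventually.of_forall fun P => ?_)
  -- per P : swap
  have hswap := integral_integral_swap
    (f := fun (x : Y) (q : ProbabilityMeasure Y × ProbabilityMeasure Y) =>
      ∫ y, k x y ∂(q.2 : Measure Y))
    (μ := (P : Measure Y)) (ν := ν)
    (integrable_of_bound _ (((sm_kInt hk).comp_measurable
      (measurable_fst.prodMk measurable_snd.snd)).aestronglyMeasurable) C
      (fun p => abs_integral_le _ fun y => hC p.1 y))
  exact hswap.symm

end YSpecific

end CovAux

/-- Unbiasedness of the distributional covariance estimator: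
`E_{μ_{n,m}}[Ĉov_k^{(n,m)}] = Cov_k(ν) = ∫ ⟨P|k|Q⟩ dν(P,Q) − ⟨join(ν₁)|k|join(ν₂)⟩`. -/
theorem covEst_unbiased
    {Y : Type*} [MeasurableSpace Y]
    (k : Y → Y → ℝ)
    (hk_meas : Measurable fun p : Y × Y => k p.1 p.2)
    (hk_symm : ∀ x y, k x y = k y x)
    (hk_bdd : ∃ K, ∀ x y, |k x y| ≤ K)
    (hk_psd : ∀ (N : ℕ) (x : Fin N → Y) (a : Fin N → ℝ),
      0 ≤ ∑ i, ∑ j, a i * k (x i) (x j) * a j)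
    (ν : Measure (ProbabilityMeasure Y × ProbabilityMeasure Y)) [IsProbabilityMeasure ν]
    (n m : ℕ) (hn : 2 ≤ n) (hm : 1 ≤ m) :
    ∫ Z, covEst k n m (fun i => (Z i).1) (fun i => (Z i).2) ∂(pairTwoStage ν n m)
      = (∫ PQ, kerInner k (PQ.1 : Measure Y) (PQ.2 : Measure Y) ∂ν)
        - kerInner k (pmJoin (ν.map Prod.fst)) (pmJoin (ν.map Prod.snd)) := by
  classical
  obtain ⟨C, hC⟩ := hk_bdd
  set M : Measure (Fin n → ProbabilityMeasure Y × ProbabilityMeasure Y) :=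
    Measure.pi fun _ : Fin n => ν with hM
  set κf : (Fin n → ProbabilityMeasure Y × ProbabilityMeasure Y) →
      Measure (Fin n → (Fin m → Y) × (Fin m → Y)) := fun PQ =>
    Measure.pi fun i : Fin n =>
      (Measure.pi fun _ : Fin m => ((PQ i).1 : Measure Y)).prod
        (Measure.pi fun _ : Fin m => ((PQ i).2 : Measure Y)) with hκf
  have hμ1 : ∀ i : Fin n,
      Measurable fun PQ : Fin n → ProbabilityMeasure Y × ProbabilityMeasure Y =>
        Measure.pi fun _ : Fin m => ((PQ i).1 : Measure Y) := fun i =>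
    CovAux.measurable_measurePi
      (fun _ => CovAux.measurable_pmCoe.comp (measurable_fst.comp (measurable_pi_apply i)))
      (fun _ a => inferInstance)
  have hμ2 : ∀ i : Fin n,
      Measurable fun PQ : Fin n → ProbabilityMeasure Y × ProbabilityMeasure Y =>
        Measure.pi fun _ : Fin m => ((PQ i).2 : Measure Y) := fun i =>
    CovAux.measurable_measurePi
      (fun _ => CovAux.measurable_pmCoe.comp (measurable_snd.comp (measurable_pi_apply i)))
      (fun _ a => inferInstance)
  have hκmeas : Measurable κf :=
    CovAux.measurable_measurePi
      (fun i => CovAux.measurable_measureProd (hμ1 i) (hμ2 i)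
        (fun a => inferInstance) (fun a => inferInstance))
      (fun i a => inferInstance)
  have hκprob : ∀ PQ, IsProbabilityMeasure (κf PQ) := fun PQ => by
    rw [hκf]; infer_instance
  haveI hMprob : IsProbabilityMeasure M := by rw [hM]; infer_instance
  have hμeq : pairTwoStage ν n m = M.bind κf := rfl
  haveI hμprob : IsProbabilityMeasure (pairTwoStage ν n m) := by
    rw [hμeq]; exact CovAux.isProbabilityMeasure_bind _ _ hκmeas hκprob
  have hT : ∀ (i s : Fin n) (j t : Fin m),
      Measurable fun Z : Fin n → (Fin m → Y) × (Fin m → Y) => k ((Z i).1 j) ((Z s).2 t) := by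
    intro i s j t
    have hp : Measurable fun Z : Fin n → (Fin m → Y) × (Fin m → Y) =>
        (((Z i).1 j), ((Z s).2 t)) :=
      ((measurable_pi_apply j).comp (measurable_fst.comp (measurable_pi_apply i))).prodMk
        ((measurable_pi_apply t).comp (measurable_snd.comp (measurable_pi_apply s)))
    exact hk_meas.comp hp
  have hTint : ∀ (i s : Fin n) (j t : Fin m),
      Integrable (fun Z : Fin n → (Fin m → Y) × (Fin m → Y) =>
        k ((Z i).1 j) ((Z s).2 t)) (pairTwoStage ν n m) :=
    fun i s j t => CovAux.integrable_of_bound _ (hT i s j t).aestronglyMeasurable C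
      (fun Z => hC _ _)
  have hterm : ∀ (i s : Fin n) (j t : Fin m),
      ∫ Z, k ((Z i).1 j) ((Z s).2 t) ∂(pairTwoStage ν n m)
        = ∫ PQ, (∫ Z, k ((Z i).1 j) ((Z s).2 t) ∂κf PQ) ∂M := by
    intro i s j t
    rw [hμeq]
    exact CovAux.integral_bind M κf hκmeas hκprob (hT i s j t) C (fun Z => hC _ _)
  have htermA : ∀ (i : Fin n) (j t : Fin m),
      ∫ Z, k ((Z i).1 j) ((Z i).2 t) ∂(pairTwoStage ν n m)
        = ∫ p, kerInner k (p.1 : Measure Y) (p.2 : Measure Y) ∂ν := by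
    intro i j t
    rw [hterm i i j t]
    have e : (fun PQ : Fin n → ProbabilityMeasure Y × ProbabilityMeasure Y =>
          ∫ Z, k ((Z i).1 j) ((Z i).2 t) ∂κf PQ)
        = fun PQ => kerInner k ((PQ i).1 : Measure Y) ((PQ i).2 : Measure Y) :=
      funext fun PQ => CovAux.inner_eq_eq hk_meas hC PQ i j t
    rw [e, hM]
    exact CovAux.M_eval_single hk_meas ν i
  have htermB : ∀ (i s : Fin n), i ≠ s → ∀ (j t : Fin m),
      ∫ Z, k ((Z i).1 j) ((Z s).2 t) ∂(pairTwoStage ν n m)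
        = kerInner k (pmJoin (ν.map Prod.fst)) (pmJoin (ν.map Prod.snd)) := by
    intro i s his j t
    rw [hterm i s j t]
    have e : (fun PQ : Fin n → ProbabilityMeasure Y × ProbabilityMeasure Y =>
          ∫ Z, k ((Z i).1 j) ((Z s).2 t) ∂κf PQ)
        = fun PQ => kerInner k ((PQ i).1 : Measure Y) ((PQ s).2 : Measure Y) :=
      funext fun PQ => CovAux.inner_eq_ne hk_meas hC PQ his j t
    rw [e, hM]
    rw [CovAux.M_eval_pair hk_meas hC ν his]
    exact CovAux.join_eq hk_meas hC ν
  set A : ℝ := ∫ p, kerInner k (p.1 : Measure Y) (p.2 : Measure Y) ∂ν with hA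
  set B : ℝ := kerInner k (pmJoin (ν.map Prod.fst)) (pmJoin (ν.map Prod.snd)) with hB
  simp only [covEst]
  have hS1int : Integrable (fun Z : Fin n → (Fin m → Y) × (Fin m → Y) =>
      ∑ i, ∑ j, ∑ t, k ((Z i).1 j) ((Z i).2 t)) (pairTwoStage ν n m) :=
    integrable_finset_sum _ fun i _ => integrable_finset_sum _ fun j _ =>
      integrable_finset_sum _ fun t _ => hTint i i j t
  have hS2int : Integrable (fun Z : Fin n → (Fin m → Y) × (Fin m → Y) =>
      ∑ i, ∑ s ∈ Finset.univ.erase i, ∑ j, ∑ t, k ((Z i).1 j) ((Z s).2 t))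
      (pairTwoStage ν n m) :=
    integrable_finset_sum _ fun i _ => integrable_finset_sum _ fun s _ =>
      integrable_finset_sum _ fun j _ => integrable_finset_sum _ fun t _ => hTint i s j t
  rw [integral_sub (hS1int.const_mul _) (hS2int.const_mul _), integral_const_mul,
    integral_const_mul]
  have h1 : ∫ Z, ∑ i, ∑ j, ∑ t, k ((Z i).1 j) ((Z i).2 t) ∂(pairTwoStage ν n m)
      = (n : ℝ) * ((m : ℝ) * ((m : ℝ) * A)) := by
    rw [integral_finset_sum _ fun i _ => integrable_finset_sum _ fun j _ =>
      integrable_finset_sum _ fun t _ => hTint i i j t]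
    have : ∀ i : Fin n, ∫ Z, ∑ j, ∑ t, k ((Z i).1 j) ((Z i).2 t) ∂(pairTwoStage ν n m)
        = (m : ℝ) * ((m : ℝ) * A) := by
      intro i
      rw [integral_finset_sum _ fun j _ => integrable_finset_sum _ fun t _ => hTint i i j t]
      have : ∀ j : Fin m, ∫ Z, ∑ t, k ((Z i).1 j) ((Z i).2 t) ∂(pairTwoStage ν n m)
          = (m : ℝ) * A := by
        intro j
        rw [integral_finset_sum _ fun t _ => hTint i i j t]
        rw [Finset.sum_congr rfl fun t _ => htermA i j t]
        simp [Finset.sum_const, Finset.card_univ, nsmul_eq_mul]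
      rw [Finset.sum_congr rfl fun j _ => this j]
      simp [Finset.sum_const, Finset.card_univ, nsmul_eq_mul]
    rw [Finset.sum_congr rfl fun i _ => this i]
    simp [Finset.sum_const, Finset.card_univ, nsmul_eq_mul]
  have h2 : ∫ Z, ∑ i, ∑ s ∈ Finset.univ.erase i, ∑ j, ∑ t, k ((Z i).1 j) ((Z s).2 t)
        ∂(pairTwoStage ν n m)
      = (n : ℝ) * (((n : ℝ) - 1) * ((m : ℝ) * ((m : ℝ) * B))) := by
    rw [integral_finset_sum _ fun i _ => integrable_finset_sum _ fun s _ =>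
      integrable_finset_sum _ fun j _ => integrable_finset_sum _ fun t _ => hTint i s j t]
    have : ∀ i : Fin n,
        ∫ Z, ∑ s ∈ Finset.univ.erase i, ∑ j, ∑ t, k ((Z i).1 j) ((Z s).2 t)
          ∂(pairTwoStage ν n m)
        = ((n : ℝ) - 1) * ((m : ℝ) * ((m : ℝ) * B)) := by
      intro i
      rw [integral_finset_sum _ fun s _ => integrable_finset_sum _ fun j _ =>
        integrable_finset_sum _ fun t _ => hTint i s j t]
      have hs : ∀ s ∈ Finset.univ.erase i,
          ∫ Z, ∑ j, ∑ t, k ((Z i).1 j) ((Z s).2 t) ∂(pairTwoStage ν n m)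
          = (m : ℝ) * ((m : ℝ) * B) := by
        intro s hsmem
        have hne : i ≠ s := (Finset.mem_erase.1 hsmem).1.symm
        rw [integral_finset_sum _ fun j _ => integrable_finset_sum _ fun t _ => hTint i s j t]
        have : ∀ j : Fin m, ∫ Z, ∑ t, k ((Z i).1 j) ((Z s).2 t) ∂(pairTwoStage ν n m)
            = (m : ℝ) * B := by
          intro j
          rw [integral_finset_sum _ fun t _ => hTint i s j t]
          rw [Finset.sum_congr rfl fun t _ => htermB i s hne j t]
          simp [Finset.sum_const, Finset.card_univ, nsmul_eq_mul]
        rw [Finset.sum_congr rfl fun j _ => this j]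
        simp [Finset.sum_const, Finset.card_univ, nsmul_eq_mul]
      rw [Finset.sum_congr rfl hs]
      rw [Finset.sum_const, Finset.card_erase_of_mem (Finset.mem_univ i), Finset.card_univ,
        Fintype.card_fin, nsmul_eq_mul]
      rw [Nat.cast_sub (by omega)]
      norm_num
    rw [Finset.sum_congr rfl fun i _ => this i]
    simp [Finset.sum_const, Finset.card_univ, nsmul_eq_mul]
  rw [h1, h2]
  have h2n : (2 : ℝ) ≤ (n : ℝ) := by exact_mod_cast hn
  have h1m : (1 : ℝ) ≤ (m : ℝ) := by exact_mod_cast hm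
  have hn0 : (n : ℝ) ≠ 0 := by linarith
  have hm0 : (m : ℝ) ≠ 0 := by linarith
  have hn1 : (n : ℝ) - 1 ≠ 0 := by
    have : (0 : ℝ) < (n : ℝ) - 1 := by linarith
    exact this.ne'
  field_simp
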